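/- Let μ be a finite measure on a measurable space X and f a bounded measurable function, and let ψ^{[i]} be the (G-orthonormal) generalized eigenfunctions with eigenvalues λ^{[i]} of ⟨ψ, f φ⟩ = λ ⟨ψ, φ⟩ restricted to an n-dimensional subspace of L²(μ) containing the constant function 1. Then the Lebesgue quadrature ∑_{i=0}^{n-1} λ^{[i]} ⟨1, ψ^{[i]}⟩² reproduces ∫ f dμ exactly. -/

import Mathlib

open MeasureTheory

theorem stmt_11 {X : Type*} [MeasurableSpace X] (μ : Measure X) [IsFiniteMeasure μ]
    {n : ℕ} (f : X → ℝ) (hf : Measurable f) (C : ℝ) (hfb : ∀ x, |f x| ≤ C)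
    (ψ : Fin n → X → ℝ) (lam : Fin n → ℝ)
    (hmeas : ∀ i, Measurable (ψ i))
    (hint : ∀ i, Integrable (ψ i) μ)
    (hint2 : ∀ i j, Integrable (fun x => ψ i x * ψ j x) μ)
    (horth : ∀ i j, ∫ x, ψ i x * ψ j x ∂μ = if i = j then 1 else 0)
    (c : Fin n → ℝ) (hone : ∀ x, (1 : ℝ) = ∑ i, c i * ψ i x)
    (heig : ∀ i j, ∫ x, f x * ψ i x * ψ j x ∂μ = lam i * ∫ x, ψ i x * ψ j x ∂μ) :
    ∑ i, lam i * (∫ x, ψ i x ∂μ) ^ 2 = ∫ x, f x ∂μ := by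
  have hfm : AEStronglyMeasurable f μ := hf.aestronglyMeasurable
  have hfint : ∀ i j, Integrable (fun x => f x * (ψ i x * ψ j x)) μ :=
    fun i j => (hint2 i j).bdd_mul (c := C) hfm (Filter.Eventually.of_forall fun x => by simpa using hfb x)
  have hci : ∀ i, ∫ x, ψ i x ∂μ = c i := by
    intro i
    have h1 : ∀ x, ψ i x = ∑ j, c j * (ψ i x * ψ j x) := by
      intro x
      calc ψ i x = ψ i x * 1 := by ring
        _ = ψ i x * ∑ j, c j * ψ j x := by rw [← hone x]
        _ = ∑ j, c j * (ψ i x * ψ j x) := by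
            rw [Finset.mul_sum]; exact Finset.sum_congr rfl fun j _ => by ring
    rw [integral_congr_ae (Filter.Eventually.of_forall h1),
      integral_finset_sum _ (fun j _ => ((hint2 i j).const_mul (c j)))]
    simp [integral_const_mul, horth]
  have hfeq : ∀ x, f x = ∑ i, ∑ j, (c i * c j) * (f x * (ψ i x * ψ j x)) := by
    intro x
    calc f x = f x * (1 * 1) := by ring
      _ = f x * ((∑ i, c i * ψ i x) * (∑ j, c j * ψ j x)) := by rw [← hone x]
      _ = ∑ i, ∑ j, (c i * c j) * (f x * (ψ i x * ψ j x)) := by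
          rw [Finset.sum_mul_sum, Finset.mul_sum]
          refine Finset.sum_congr rfl fun i _ => ?_
          rw [Finset.mul_sum]
          exact Finset.sum_congr rfl fun j _ => by ring
  rw [integral_congr_ae (Filter.Eventually.of_forall hfeq),
    integral_finset_sum _ (fun i _ => integrable_finset_sum _
      (fun j _ => ((hfint i j).const_mul _)))]
  have : ∀ i : Fin n, ∫ x, ∑ j, (c i * c j) * (f x * (ψ i x * ψ j x)) ∂μ
      = lam i * (∫ x, ψ i x ∂μ) ^ 2 := by
    intro i
    rw [integral_finset_sum _ (fun j _ => ((hfint i j).const_mul _))]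
    have hij : ∀ j : Fin n, ∫ x, f x * (ψ i x * ψ j x) ∂μ
        = lam i * (if i = j then 1 else 0) := by
      intro j
      have : (fun x => f x * (ψ i x * ψ j x)) = fun x => f x * ψ i x * ψ j x := by
        funext x; ring
      rw [this, heig i j, horth i j]
    simp only [integral_const_mul, hij, hci, mul_ite, mul_zero, mul_one,
      Finset.sum_ite_eq, Finset.mem_univ, if_true]
    ring
  exact (Finset.sum_congr rfl fun i _ => (this i).symm)
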